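/- For s ≥ 0 let k(s) = ⌊√(s + 1/4) + 1/2⌋ and define N_N(s) = (k(s)² + k(s))/2 and N_D(s) = (k(s)² − k(s))/2. Define the averages A_N(t) = (1/t)∫₀ᵗ (N_N(s) − (s/2 + (1/2)√(s + 1/4) + 1/6)) ds and A_D(t) = (1/t)∫₀ᵗ (N_D(s) − (s/2 − (1/2)√(s + 1/4) + 1/6)) ds. Then with g(x) = 1/6 − 2(x − ⌊x + 1/2⌋)², there is a constant C such that |A_N(t) − (1/2)g(√(t + 1/4))| ≤ C t^{−1/2} and |A_D(t) − (1/2)g(√(t + 1/4))| ≤ C t^{−1/2} for all t ≥ 1. -/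

import Mathlib

open Real MeasureTheory intervalIntegral

noncomputable def hemR (e K s : ℝ) : ℝ :=
  e*K/24 + K^2/8 - e*K^3/6 - K^4/4 + (s+1/4)*(e*K/2 + K^2/2 - 1/24)
    - e/3*((s+1/4)*Real.sqrt (s+1/4)) - 1/4*(s+1/4)^2

lemma hemR_hasDerivAt (e K s : ℝ) (hs : 0 ≤ s) :
    HasDerivAt (hemR e K)
      (((K^2 + e*K)/2) - (s/2 + e*Real.sqrt (s+1/4)/2 + 1/6)) s := by
  have h4 : (0:ℝ) < s + 1/4 := by linarith
  have hss : Real.sqrt (s+1/4) * Real.sqrt (s+1/4) = s + 1/4 := Real.mul_self_sqrt h4.le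
  have hsne : Real.sqrt (s+1/4) ≠ 0 := by positivity
  set r := Real.sqrt (s+1/4) with hr
  have h1 : HasDerivAt (fun y : ℝ => y + 1/4) 1 s := (hasDerivAt_id s).add_const _
  have h2 : HasDerivAt (fun y : ℝ => Real.sqrt (y+1/4)) (1/(2*r) * 1) s :=
    (Real.hasDerivAt_sqrt h4.ne').comp s h1
  have h3 : HasDerivAt (fun y : ℝ => (y+1/4)*Real.sqrt (y+1/4))
      (1*r + (s+1/4)*(1/(2*r) * 1)) s := h1.mul h2
  have h5 : HasDerivAt (fun y : ℝ => (y+1/4)^2) (2*(s+1/4)^1*1) s := h1.pow 2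
  have H := (((h1.const_mul (e*K/2 + K^2/2 - 1/24)).const_add
      (e*K/24 + K^2/8 - e*K^3/6 - K^4/4)).sub (h3.const_mul (e/3))).sub (h5.const_mul (1/4))
  have hfun : hemR e K = fun y : ℝ =>
      (e*K/24 + K^2/8 - e*K^3/6 - K^4/4) + (e*K/2 + K^2/2 - 1/24)*(y+1/4)
        - e/3*((y+1/4)*Real.sqrt (y+1/4)) - 1/4*(y+1/4)^2 := by
    funext y; unfold hemR; ring
  have h6 : (s + 1/4) * (1/(2*r) * 1) = r/2 := by
    rw [mul_one, ← hss]
    field_simp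
  rw [hfun]
  refine H.congr_deriv ?_
  rw [h6]
  ring

lemma hem_floor_eq (k : ℕ) (hk : 1 ≤ k) (s : ℝ)
    (h1 : (k:ℝ)^2 - k ≤ s) (h2 : s < (k:ℝ)^2 + k) :
    ⌊Real.sqrt (s + 1/4) + 1/2⌋ = (k:ℤ) := by
  have hk1 : (1:ℝ) ≤ (k:ℝ) := by exact_mod_cast hk
  have h0 : (0:ℝ) ≤ s + 1/4 := by nlinarith
  have hlow : ((k:ℝ) - 1/2) ≤ Real.sqrt (s+1/4) :=
    (Real.le_sqrt (by linarith) h0).2 (by nlinarith)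
  have hhigh : Real.sqrt (s+1/4) < (k:ℝ) + 1/2 :=
    (Real.sqrt_lt' (by linarith)).2 (by nlinarith)
  apply Int.floor_eq_iff.2
  constructor
  · push_cast; linarith
  · push_cast; linarith

lemma hem_piece (e : ℝ) (F : ℝ → ℝ)
    (hF : ∀ s : ℝ, 0 ≤ s → F s =
      ((⌊Real.sqrt (s + 1/4) + 1/2⌋ : ℝ)^2 + e*(⌊Real.sqrt (s + 1/4) + 1/2⌋ : ℝ))/2
        - (s/2 + e*Real.sqrt (s+1/4)/2 + 1/6))
    (k : ℕ) (hk : 1 ≤ k) (a b : ℝ)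
    (h1 : (k:ℝ)^2 - k ≤ a) (h2 : a ≤ b) (h3 : b ≤ (k:ℝ)^2 + k) :
    IntervalIntegrable F volume a b ∧
      ∫ s in a..b, F s = hemR e k b - hemR e k a := by
  have hk1 : (1:ℝ) ≤ (k:ℝ) := by exact_mod_cast hk
  have ha0 : (0:ℝ) ≤ a := by nlinarith
  set f : ℝ → ℝ := fun s =>
    (((k:ℝ)^2 + e*(k:ℝ))/2) - (s/2 + e*Real.sqrt (s+1/4)/2 + 1/6) with hf
  have hf_cont : Continuous f := by
    rw [hf]; fun_prop
  have haeset : ∀ᵐ x : ℝ, x ≠ (k:ℝ)^2 + k := by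
    refine MeasureTheory.ae_iff.2 ?_
    simp only [not_not]
    rw [show {a : ℝ | a = (k:ℝ)^2 + k} = {((k:ℝ)^2 + k)} from by ext y; simp]
    exact measure_singleton _
  have hae : ∀ᵐ x : ℝ, x ∈ Set.uIoc a b → F x = f x := by
    filter_upwards [haeset] with x hxne hxI
    rw [Set.uIoc_of_le h2] at hxI
    have hx0 : 0 ≤ x := le_trans ha0 hxI.1.le
    have hxlt : x < (k:ℝ)^2 + k := lt_of_le_of_ne (le_trans hxI.2 h3) hxne
    rw [hF x hx0, hem_floor_eq k hk x (le_trans h1 hxI.1.le) hxlt, hf]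
    push_cast
    ring
  have haerestrict : f =ᵐ[volume.restrict (Set.uIoc a b)] F := by
    rw [Filter.EventuallyEq, MeasureTheory.ae_restrict_iff' measurableSet_uIoc]
    filter_upwards [hae] with x h hx
    exact (h hx).symm
  have hfInt : IntervalIntegrable f volume a b := hf_cont.intervalIntegrable a b
  refine ⟨hfInt.congr_ae haerestrict, ?_⟩
  rw [intervalIntegral.integral_congr_ae hae]
  apply intervalIntegral.integral_eq_sub_of_hasDerivAt
  · intro x hx
    rw [Set.uIcc_of_le h2] at hx
    exact hemR_hasDerivAt e k x (le_trans ha0 hx.1)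
  · exact hfInt

lemma hem_junction (e c : ℝ) (hc : 0 ≤ c) :
    hemR e c (c^2 + c) = hemR e (c+1) (c^2 + c) := by
  have h : Real.sqrt (c^2 + c + 1/4) = c + 1/2 := by
    rw [show c^2 + c + 1/4 = (c + 1/2)^2 by ring, Real.sqrt_sq (by linarith)]
  unfold hemR
  rw [h]
  ring

lemma hem_key (e : ℝ) (F : ℝ → ℝ)
    (hF : ∀ s : ℝ, 0 ≤ s → F s =
      ((⌊Real.sqrt (s + 1/4) + 1/2⌋ : ℝ)^2 + e*(⌊Real.sqrt (s + 1/4) + 1/2⌋ : ℝ))/2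
        - (s/2 + e*Real.sqrt (s+1/4)/2 + 1/6)) :
    ∀ n : ℕ, 1 ≤ n → ∀ t : ℝ, (n:ℝ)^2 - n ≤ t → t ≤ (n:ℝ)^2 + n →
      IntervalIntegrable F volume 0 t ∧
        ∫ s in (0:ℝ)..t, F s = hemR e n t - hemR e 1 0 := by
  intro n
  induction n with
  | zero => omega
  | succ m ih =>
    intro _ t h1 h2
    rcases Nat.eq_zero_or_pos m with hm0 | hm1
    · subst hm0
      have h1' : (0:ℝ) ≤ t := by push_cast at h1; linarith
      have h2' : t ≤ (1:ℝ)^2 + 1 := by push_cast at h2 ⊢; linarith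
      have := hem_piece e F hF 1 le_rfl 0 t (by norm_num) h1' (by push_cast; linarith)
      refine ⟨this.1, ?_⟩
      rw [this.2]
      norm_num
    · have hm1' : (1:ℝ) ≤ (m:ℝ) := by exact_mod_cast hm1
      push_cast at h1 h2
      have hmid1 : (m:ℝ)^2 - m ≤ (m:ℝ)^2 + m := by linarith
      obtain ⟨ihInt, ihEq⟩ := ih hm1 ((m:ℝ)^2 + m) hmid1 le_rfl
      have hp := hem_piece e F hF (m+1) (by omega) ((m:ℝ)^2 + m) t
        (by push_cast; ring_nf; linarith) (by nlinarith) (by push_cast; nlinarith)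
      refine ⟨ihInt.trans hp.1, ?_⟩
      rw [← intervalIntegral.integral_add_adjacent_intervals ihInt hp.1, ihEq, hp.2]
      have hj := hem_junction e (m:ℝ) (by linarith)
      push_cast
      linarith [hj]

set_option maxHeartbeats 2000000 in
lemma hem_main (e : ℝ) (he : e = 1 ∨ e = -1) (F : ℝ → ℝ)
    (hF : ∀ s : ℝ, 0 ≤ s → F s =
      ((⌊Real.sqrt (s + 1/4) + 1/2⌋ : ℝ)^2 + e*(⌊Real.sqrt (s + 1/4) + 1/2⌋ : ℝ))/2
        - (s/2 + e*Real.sqrt (s+1/4)/2 + 1/6))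
    (t : ℝ) (ht : 1 ≤ t) :
    |(1 / t) * (∫ s in (0:ℝ)..t, F s)
      - (1/2) * (1/6 - 2*(Real.sqrt (t+1/4)
          - (⌊Real.sqrt (t+1/4) + 1/2⌋ : ℝ))^2)| ≤ 4 * t ^ (-(1/2) : ℝ) := by
  have ht0 : (0:ℝ) < t := by linarith
  set x := Real.sqrt (t + 1/4) with hxdef
  have hx2 : x^2 = t + 1/4 := Real.sq_sqrt (by linarith)
  have hxnn : 0 ≤ x := Real.sqrt_nonneg _
  have hx1 : (1:ℝ) ≤ x := by nlinarith
  set m : ℤ := ⌊x + 1/2⌋ with hm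
  have hm1 : 1 ≤ m := by
    rw [hm]; exact Int.le_floor.2 (by push_cast; linarith)
  set n : ℕ := m.toNat with hn
  have hn1 : 1 ≤ n := by omega
  have hzn : (n:ℤ) = m := Int.toNat_of_nonneg (by omega)
  have hnm : (n:ℝ) = (m:ℝ) := by exact_mod_cast hzn
  have hfl : (m:ℝ) ≤ x + 1/2 := Int.floor_le _
  have hfu : x + 1/2 < (m:ℝ) + 1 := Int.lt_floor_add_one _
  have hvl : -(1/2 : ℝ) ≤ x - n := by rw [hnm]; linarith
  have hvu : x - (n:ℝ) ≤ 1/2 := by rw [hnm]; linarith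
  have hb1 : (n:ℝ)^2 - n ≤ t := by nlinarith [hvl, hvu, hx2]
  have hb2 : t ≤ (n:ℝ)^2 + n := by nlinarith [hvl, hvu, hx2]
  obtain ⟨_, hval⟩ := hem_key e F hF n hn1 t hb1 hb2
  rw [hval]
  have hs0 : Real.sqrt ((0:ℝ) + 1/4) = 1/2 := by
    rw [show (0:ℝ) + 1/4 = (1/2)^2 by norm_num, Real.sqrt_sq (by norm_num)]
  have ht' : t = x^2 - 1/4 := by linarith
  have key_eq : hemR e n t - hemR e 1 0 - (t/2)*(1/6 - 2*(x - n)^2)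
      = 3/64 + e/24 - e*(x-n)/24 - (x-n)^2/8 + e*(x-n)^3/6 - (x-n)^4/4
        + x*(e/24 - (x-n)/4 - e*(x-n)^2/2 + (x-n)^3) := by
    unfold hemR
    rw [hs0, ← hxdef, ht']
    ring
  have habs : |hemR e (n:ℝ) t - hemR e 1 0 - (t/2)*(1/6 - 2*(x - n)^2)| ≤ 2*x := by
    rw [key_eq, abs_le]
    clear key_eq hval hF
    clear_value x m n
    generalize hv : x - (n:ℝ) = v at hvl hvu ⊢
    have hb2 : v^2 ≤ 1/4 := by nlinarith
    have hb3u : v^3 ≤ 1/8 := by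
      nlinarith [mul_nonneg (by linarith : (0:ℝ) ≤ 1/2 - v) (sq_nonneg v)]
    have hb3l : -(1/8 : ℝ) ≤ v^3 := by
      nlinarith [mul_nonneg (by linarith : (0:ℝ) ≤ v + 1/2) (sq_nonneg v)]
    have hb4 : v^4 ≤ 1/16 := by
      nlinarith [mul_nonneg (by linarith : (0:ℝ) ≤ 1/4 - v^2) (sq_nonneg v)]
    have hb4n : 0 ≤ v^4 := by positivity
    have hxvu : x*v ≤ x*(1/2) := mul_le_mul_of_nonneg_left hvu hxnn
    have hxvl : x*(-(1/2:ℝ)) ≤ x*v := mul_le_mul_of_nonneg_left hvl hxnn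
    have hxv2u : x*v^2 ≤ x*(1/4) := mul_le_mul_of_nonneg_left hb2 hxnn
    have hxv2l : 0 ≤ x*v^2 := by positivity
    have hxv3u : x*v^3 ≤ x*(1/8) := mul_le_mul_of_nonneg_left hb3u hxnn
    have hxv3l : x*(-(1/8:ℝ)) ≤ x*v^3 := mul_le_mul_of_nonneg_left hb3l hxnn
    rcases he with he | he <;> subst he <;> constructor <;>
      nlinarith [hb2, hb3u, hb3l, hb4, hb4n, hxvu, hxvl, hxv2u, hxv2l, hxv3u, hxv3l, hx1]
  have hrw : (1 / t) * (hemR e n t - hemR e 1 0) - (1/2) * (1/6 - 2*(x - (m:ℝ))^2)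
      = (1/t) * (hemR e n t - hemR e 1 0 - (t/2)*(1/6 - 2*(x - n)^2)) := by
    rw [hnm]
    field_simp
  rw [hrw, abs_mul, abs_of_pos (by positivity : (0:ℝ) < 1/t)]
  have hrpow : t ^ (-(1/2) : ℝ) = (Real.sqrt t)⁻¹ := by
    rw [Real.rpow_neg ht0.le, Real.sqrt_eq_rpow]
  have hst : Real.sqrt t * Real.sqrt t = t := Real.mul_self_sqrt ht0.le
  have hstpos : 0 < Real.sqrt t := Real.sqrt_pos.2 ht0
  have hxle : x ≤ 2 * Real.sqrt t := by
    rw [hxdef]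
    calc Real.sqrt (t + 1/4) ≤ Real.sqrt (4*t) := Real.sqrt_le_sqrt (by linarith)
    _ = 2 * Real.sqrt t := by
        rw [show (4:ℝ)*t = (2:ℝ)^2 * t by ring, Real.sqrt_mul (by positivity),
          Real.sqrt_sq (by norm_num)]
  calc (1/t) * |hemR e n t - hemR e 1 0 - (t/2)*(1/6 - 2*(x - n)^2)|
      ≤ (1/t) * (2*x) := by
        apply mul_le_mul_of_nonneg_left habs (by positivity)
    _ ≤ 4 * t ^ (-(1/2) : ℝ) := by
        rw [hrpow]
        have h1 : (1/t) * (2*x) ≤ (1/t) * (2*(2*Real.sqrt t)) := by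
          apply mul_le_mul_of_nonneg_left (by linarith) (by positivity)
        have h2 : (1/t) * (2*(2*Real.sqrt t)) = 4 * (Real.sqrt t)⁻¹ := by
          field_simp
          linear_combination 4*hst
        linarith

/-- Average error asymptotics for the hemisphere with Neumann and Dirichlet boundary
conditions: both averages are `(1/2) g(√(t + 1/4)) + O(t^{-1/2})` where
`g(x) = 1/6 − 2(x − ⌊x + 1/2⌋)²`. -/
theorem hemisphere_average_error (g : ℝ → ℝ)
    (hg : ∀ x : ℝ, g x = 1 / 6 - 2 * (x - (⌊x + 1 / 2⌋ : ℝ)) ^ 2)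
    (NN ND : ℝ → ℝ)
    (hNN : ∀ s : ℝ, 0 ≤ s → NN s =
      ((⌊Real.sqrt (s + 1 / 4) + 1 / 2⌋ : ℝ) ^ 2 + (⌊Real.sqrt (s + 1 / 4) + 1 / 2⌋ : ℝ)) / 2)
    (hND : ∀ s : ℝ, 0 ≤ s → ND s =
      ((⌊Real.sqrt (s + 1 / 4) + 1 / 2⌋ : ℝ) ^ 2 - (⌊Real.sqrt (s + 1 / 4) + 1 / 2⌋ : ℝ)) / 2) :
    ∃ C : ℝ, ∀ t : ℝ, 1 ≤ t →
      |(1 / t) * (∫ s in (0:ℝ)..t,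
          (NN s - (s / 2 + (1 / 2) * Real.sqrt (s + 1 / 4) + 1 / 6)))
        - (1 / 2) * g (Real.sqrt (t + 1 / 4))| ≤ C * t ^ (-(1/2) : ℝ) ∧
      |(1 / t) * (∫ s in (0:ℝ)..t,
          (ND s - (s / 2 - (1 / 2) * Real.sqrt (s + 1 / 4) + 1 / 6)))
        - (1 / 2) * g (Real.sqrt (t + 1 / 4))| ≤ C * t ^ (-(1/2) : ℝ) := by
  refine ⟨4, fun t ht => ⟨?_, ?_⟩⟩
  · have h := hem_main 1 (Or.inl rfl)
      (fun s => NN s - (s / 2 + (1 / 2) * Real.sqrt (s + 1 / 4) + 1 / 6))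
      (fun s hs => by rw [hNN s hs]; ring) t ht
    rw [hg]
    exact h
  · have h := hem_main (-1) (Or.inr rfl)
      (fun s => ND s - (s / 2 - (1 / 2) * Real.sqrt (s + 1 / 4) + 1 / 6))
      (fun s hs => by rw [hND s hs]; ring) t ht
    rw [hg]
    exact h
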